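/- arXiv:0905.2410 — 2 statements merged into one kernel-verified Lean document; each statement's English description precedes it below -/
import Mathlib

section
/- Let (A, χ) be a C*-algebra with character, h a Hilbert space, π : A → B(h) a *-homomorphism and ξ ∈ h. Define ν := π − χ(·)I_h and φ : A → B(ℂ ⊕ h) by the block matrix φ(a) = [[⟨ξ, ν(a)ξ⟩, ⟨ξ|ν(a)],[ν(a)|ξ⟩, ν(a)]]. Then φ satisfies the χ-structure relation: φ(a*b) = φ(a)* χ(b) + conj(χ(a)) φ(b) + φ(a)* Δ φ(b), where Δ = 0 ⊕ I_h ∈ B(ℂ ⊕ h). -/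
noncomputable section
open ContinuousLinearMap

/-- The Hilbert space `ĥ = ℂ ⊕ h` (with the `ℓ²` direct sum norm). -/
abbrev hilHat (h : Type*) [NormedAddCommGroup h] [InnerProductSpace ℂ h] :=
  WithLp 2 (ℂ × h)

/-- Block operator `[[a, r],[cv, d]]` on `ℂ ⊕ h`. -/
def blk {h : Type*} [NormedAddCommGroup h] [InnerProductSpace ℂ h]
    (a : ℂ) (r : h →L[ℂ] ℂ) (cv : ℂ →L[ℂ] h) (d : h →L[ℂ] h) :
    hilHat h →L[ℂ] hilHat h :=
  let e := WithLp.prodContinuousLinearEquiv 2 ℂ ℂ h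
  (e.symm : ℂ × h →L[ℂ] hilHat h) ∘L
    (((a • ContinuousLinearMap.fst ℂ ℂ h + r ∘L ContinuousLinearMap.snd ℂ ℂ h).prod
      (cv ∘L ContinuousLinearMap.fst ℂ ℂ h + d ∘L ContinuousLinearMap.snd ℂ ℂ h))) ∘L
    (e : hilHat h →L[ℂ] ℂ × h)


section Aux
variable {h : Type*} [NormedAddCommGroup h] [InnerProductSpace ℂ h]

theorem blk_apply_fst' (a : ℂ) (r : h →L[ℂ] ℂ) (cv : ℂ →L[ℂ] h) (d : h →L[ℂ] h)
    (v : hilHat h) : (blk a r cv d v).fst = a * v.fst + r v.snd := rfl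

theorem blk_apply_snd' (a : ℂ) (r : h →L[ℂ] ℂ) (cv : ℂ →L[ℂ] h) (d : h →L[ℂ] h)
    (v : hilHat h) : (blk a r cv d v).snd = cv v.fst + d v.snd := rfl

theorem star_blk' [CompleteSpace h] (ξ : h) (T : h →L[ℂ] h) :
    star (blk ((inner ℂ ξ (T ξ) : ℂ)) ((innerSL ℂ ξ) ∘L T)
        (ContinuousLinearMap.toSpanSingleton ℂ (T ξ)) T)
      = blk ((inner ℂ ξ (adjoint T ξ) : ℂ)) ((innerSL ℂ ξ) ∘L adjoint T)
        (ContinuousLinearMap.toSpanSingleton ℂ (adjoint T ξ)) (adjoint T) := by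
  rw [star_eq_adjoint]
  symm
  rw [eq_adjoint_iff]
  intro x y
  simp only [WithLp.prod_inner_apply, WithLp.ofLp_fst, WithLp.ofLp_snd, blk_apply_fst', blk_apply_snd',
    ContinuousLinearMap.comp_apply, innerSL_apply_apply, toSpanSingleton_apply,
    inner_add_left, inner_add_right, inner_smul_left, inner_smul_right,
    adjoint_inner_left, adjoint_inner_right, RCLike.inner_apply, map_mul, map_add,
    inner_conj_symm]
  ring

end Aux

/-- Let `(A, χ)` be a C*-algebra with character, `π : A → B(h)` a
*-homomorphism and `ξ ∈ h`.  With `ν := π − χ(·)I_h` and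
`φ(a) = [[⟨ξ, ν(a)ξ⟩, ⟨ξ|ν(a)],[ν(a)|ξ⟩, ν(a)]] : A → B(ℂ ⊕ h)`, the map `φ`
satisfies the χ-structure relation
`φ(a*b) = φ(a)* χ(b) + conj(χ(a)) φ(b) + φ(a)* Δ φ(b)` where `Δ = 0 ⊕ I_h`. -/
theorem stmt7 {A h : Type*} [NonUnitalNormedRing A] [StarRing A] [CStarRing A]
    [NormedSpace ℂ A] [IsScalarTower ℂ A A] [SMulCommClass ℂ A A] [StarModule ℂ A]
    [NormedAddCommGroup h] [InnerProductSpace ℂ h] [CompleteSpace h]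
    (χ : A →⋆ₙₐ[ℂ] ℂ) (hχ : χ ≠ 0)
    (π : A →⋆ₙₐ[ℂ] (h →L[ℂ] h)) (ξ : h)
    (ν : A → (h →L[ℂ] h)) (hν : ∀ a, ν a = π a - χ a • ContinuousLinearMap.id ℂ h)
    (φ : A → (hilHat h →L[ℂ] hilHat h))
    (hφ : ∀ a, φ a = blk ((inner ℂ ξ (ν a ξ) : ℂ)) ((innerSL ℂ ξ) ∘L ν a)
        (ContinuousLinearMap.toSpanSingleton ℂ (ν a ξ)) (ν a))
    (Δop : hilHat h →L[ℂ] hilHat h)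
    (hΔ : Δop = blk 0 0 0 (ContinuousLinearMap.id ℂ h)) :
    ∀ a b : A, φ (star a * b) =
      χ b • star (φ a) + starRingEnd ℂ (χ a) • φ b + star (φ a) ∘L Δop ∘L φ b := by
  intro a b
  have hadj : adjoint (ν a) = ν (star a) := by
    rw [← star_eq_adjoint, hν, hν, map_star, map_star]
    ext x
    simp [star_sub, star_eq_adjoint, adjoint_id, inner_smul_left, inner_smul_right]
  have hmul : ν (star a * b) = χ b • ν (star a) + starRingEnd ℂ (χ a) • ν b
      + ν (star a) ∘L ν b := by
    have h1 := hν (star a); have h2 := hν b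
    rw [hν, map_mul, map_mul, map_star, h1, h2]
    ext x
    simp only [ContinuousLinearMap.sub_apply, ContinuousLinearMap.add_apply,
      ContinuousLinearMap.smul_apply, ContinuousLinearMap.comp_apply,
      ContinuousLinearMap.mul_apply, ContinuousLinearMap.id_apply, smul_sub, sub_apply,
      RingHom.id_apply, smul_smul, map_star, map_sub, map_smul, starRingEnd_apply]
    module
  have hstar : star (φ a) = blk ((inner ℂ ξ (ν (star a) ξ) : ℂ))
      ((innerSL ℂ ξ) ∘L ν (star a))
      (ContinuousLinearMap.toSpanSingleton ℂ (ν (star a) ξ)) (ν (star a)) := by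
    rw [hφ, star_blk', hadj]
  rw [hφ (star a * b), hstar, hφ b, hΔ, hmul]
  refine ContinuousLinearMap.ext fun v => WithLp.ofLp_injective 2 (Prod.ext ?_ ?_)
  · simp only [ContinuousLinearMap.add_apply,
      ContinuousLinearMap.smul_apply, ContinuousLinearMap.comp_apply,
      WithLp.ofLp_fst, WithLp.ofLp_snd, blk_apply_fst', blk_apply_snd', WithLp.add_fst, WithLp.add_snd,
      WithLp.smul_fst, WithLp.smul_snd, innerSL_apply_apply, toSpanSingleton_apply,
      inner_add_right, inner_smul_right, map_add, map_smul, smul_eq_mul,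
      zero_mul, zero_add, add_zero, ContinuousLinearMap.zero_apply,
      ContinuousLinearMap.id_apply, smul_add, smul_smul]
    ring
  · simp only [ContinuousLinearMap.add_apply,
      ContinuousLinearMap.smul_apply, ContinuousLinearMap.comp_apply,
      WithLp.ofLp_fst, WithLp.ofLp_snd, blk_apply_fst', blk_apply_snd', WithLp.add_fst, WithLp.add_snd,
      WithLp.smul_fst, WithLp.smul_snd, innerSL_apply_apply, toSpanSingleton_apply,
      inner_add_right, inner_smul_right, map_add, map_smul, smul_eq_mul,
      zero_mul, zero_add, add_zero, ContinuousLinearMap.zero_apply,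
      ContinuousLinearMap.id_apply, smul_add, smul_smul]
    module
end
end

section
/- Let (A, χ) be a C*-algebra with character, π : A → B(h) a *-homomorphism, ξ ∈ h, and for 0 < h with h‖ξ‖² ≤ 1 let U = U_ξ^{(h)} be the unitary above and ψ^{(h)}(a) := U* (χ(a) ⊕ π(a)) U. With ν = π − χ(·)I_h, γ = ω_ξ ∘ ν, X = |ξ⟩⟨ξ|, φ the implemented block map [[γ, ⟨ξ|ν(·)],[ν(·)|ξ⟩, ν]], φ₁ = [[0, γ(·)⟨ξ|],[γ(·)|ξ⟩, Xν(·)+ν(·)X]], and φ₂ = γ(·)(0 ⊕ X), one has the exact identity: φ − Σ_h(ψ^{(h)} − χ(·)I_{ℂ⊕h}) = (h/(1+c_h)) φ₁ − (h²/(1+c_h)²) φ₂, where Σ_h is conjugation by the scaling operator S_h = h^{−1/2} ⊕ I_h and c_h = √(1 − h‖ξ‖²). -/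
noncomputable section
open ContinuousLinearMap

variable {h : Type*} [NormedAddCommGroup h] [InnerProductSpace ℂ h] [CompleteSpace h]

/-- The normalisation `ξ' = ξ/‖ξ‖` (equal to `0` when `ξ = 0`). -/
def xiNorm (ξ : h) : h := (‖ξ‖⁻¹ : ℝ) • ξ

/-- The projection `Q_ξ = |ξ'⟩⟨ξ'|` onto `ℂξ`. -/
def Qproj (ξ : h) : h →L[ℂ] h := (innerSL ℂ (xiNorm ξ)).smulRight (xiNorm ξ)

/-- The block unitary `U_ξ^{(t)} = [[c, −s*],[s, cQ + Q^⊥]]`. -/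
def Uop (ξ : h) (t : ℝ) : hilHat h →L[ℂ] hilHat h :=
  blk ((Real.sqrt (1 - t * ‖ξ‖ ^ 2) : ℝ) : ℂ)
    (-((Real.sqrt t : ℂ) • (innerSL ℂ ξ)))
    ((Real.sqrt t : ℂ) • ContinuousLinearMap.toSpanSingleton ℂ ξ)
    (((Real.sqrt (1 - t * ‖ξ‖ ^ 2) : ℝ) : ℂ) • Qproj ξ +
      (ContinuousLinearMap.id ℂ h - Qproj ξ))

/-- The rank-one operator `X = |ξ⟩⟨ξ|`. -/
def Xop (ξ : h) : h →L[ℂ] h := (innerSL ℂ ξ).smulRight ξ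

/-- The scaling operator `S_t = diag(t^{−1/2}, I_h)` on `ℂ ⊕ h`. -/
def Sop (t : ℝ) : hilHat h →L[ℂ] hilHat h :=
  blk (((Real.sqrt t)⁻¹ : ℝ) : ℂ) 0 0 (ContinuousLinearMap.id ℂ h)

variable {A : Type*} [NonUnitalNormedRing A] [StarRing A] [CStarRing A]
  [NormedSpace ℂ A] [IsScalarTower ℂ A A] [SMulCommClass ℂ A A] [StarModule ℂ A]

/-- `ν = π − χ(·)I_h`. -/
def nuMap (π : A →⋆ₙₐ[ℂ] (h →L[ℂ] h)) (χ : A →⋆ₙₐ[ℂ] ℂ) (a : A) : h →L[ℂ] h :=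
  π a - χ a • ContinuousLinearMap.id ℂ h

/-- `γ = ω_ξ ∘ ν`. -/
def gammaF (π : A →⋆ₙₐ[ℂ] (h →L[ℂ] h)) (χ : A →⋆ₙₐ[ℂ] ℂ) (ξ : h) (a : A) : ℂ :=
  inner ℂ ξ (nuMap π χ a ξ)

/-- The implemented block map `φ = [[γ, ⟨ξ|ν(·)],[ν(·)|ξ⟩, ν]]`. -/
def phiMap (π : A →⋆ₙₐ[ℂ] (h →L[ℂ] h)) (χ : A →⋆ₙₐ[ℂ] ℂ) (ξ : h) (a : A) :
    hilHat h →L[ℂ] hilHat h :=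
  blk (gammaF π χ ξ a) ((innerSL ℂ ξ) ∘L nuMap π χ a)
    (ContinuousLinearMap.toSpanSingleton ℂ (nuMap π χ a ξ)) (nuMap π χ a)

/-- `φ₁ = [[0, γ(·)⟨ξ|],[γ(·)|ξ⟩, Xν(·)+ν(·)X]]`. -/
def phi1 (π : A →⋆ₙₐ[ℂ] (h →L[ℂ] h)) (χ : A →⋆ₙₐ[ℂ] ℂ) (ξ : h) (a : A) :
    hilHat h →L[ℂ] hilHat h :=
  blk 0 (gammaF π χ ξ a • innerSL ℂ ξ)
    (gammaF π χ ξ a • ContinuousLinearMap.toSpanSingleton ℂ ξ)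
    (Xop ξ ∘L nuMap π χ a + nuMap π χ a ∘L Xop ξ)

/-- `φ₂ = γ(·)(0 ⊕ X)`. -/
def phi2 (π : A →⋆ₙₐ[ℂ] (h →L[ℂ] h)) (χ : A →⋆ₙₐ[ℂ] ℂ) (ξ : h) (a : A) :
    hilHat h →L[ℂ] hilHat h :=
  blk 0 0 0 (gammaF π χ ξ a • Xop ξ)

/-- `ψ^{(t)} = U* (χ ⊕ π)(·) U`. -/
def psiH (π : A →⋆ₙₐ[ℂ] (h →L[ℂ] h)) (χ : A →⋆ₙₐ[ℂ] ℂ) (ξ : h) (t : ℝ) (a : A) :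
    hilHat h →L[ℂ] hilHat h :=
  star (Uop ξ t) ∘L blk (χ a) 0 0 (π a) ∘L Uop ξ t


set_option linter.unusedSectionVars false
set_option linter.unusedVariables false

lemma blk_apply (a : ℂ) (r : h →L[ℂ] ℂ) (cv : ℂ →L[ℂ] h) (d : h →L[ℂ] h)
    (x : hilHat h) :
    blk a r cv d x = (WithLp.equiv 2 (ℂ × h)).symm
      (a * ((WithLp.equiv 2 (ℂ × h)) x).1 + r ((WithLp.equiv 2 (ℂ × h)) x).2,
       cv ((WithLp.equiv 2 (ℂ × h)) x).1 + d ((WithLp.equiv 2 (ℂ × h)) x).2) := rfl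

lemma hilHat_ext {x y : hilHat h}
    (h1 : ((WithLp.equiv 2 (ℂ × h)) x).1 = ((WithLp.equiv 2 (ℂ × h)) y).1)
    (h2 : ((WithLp.equiv 2 (ℂ × h)) x).2 = ((WithLp.equiv 2 (ℂ × h)) y).2) : x = y := by
  apply (WithLp.equiv 2 (ℂ × h)).injective
  exact Prod.ext h1 h2

lemma star_blk (a z w : ℂ) (ξ η : h) (d : h →L[ℂ] h) :
    star (blk a (z • innerSL ℂ ξ) (w • ContinuousLinearMap.toSpanSingleton ℂ η) d)
      = blk (star a) (star w • innerSL ℂ η)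
          (star z • ContinuousLinearMap.toSpanSingleton ℂ ξ)
          (ContinuousLinearMap.adjoint d) := by
  rw [ContinuousLinearMap.star_eq_adjoint]
  refine ((ContinuousLinearMap.eq_adjoint_iff _ _).mpr fun x y => ?_).symm
  simp only [blk_apply, WithLp.prod_inner_apply]
  simp [inner_add_left, inner_add_right, inner_smul_left, inner_smul_right,
    ContinuousLinearMap.toSpanSingleton_apply, ContinuousLinearMap.adjoint_inner_left,
    ContinuousLinearMap.adjoint_inner_right, mul_comm, mul_left_comm,
    RCLike.inner_apply, innerSL_apply_apply]
  ring

set_option maxHeartbeats 1000000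
set_option synthInstance.maxHeartbeats 1000000

lemma adjoint_rankOne (v : h) :
    ContinuousLinearMap.adjoint ((innerSL ℂ v).smulRight v) = (innerSL ℂ v).smulRight v := by
  refine ((ContinuousLinearMap.eq_adjoint_iff _ _).mpr fun x y => ?_).symm
  simp [inner_smul_left, inner_smul_right]
  ring

lemma adjoint_Uop_d (ξ : h) (c : ℂ) :
    ContinuousLinearMap.adjoint (c • Qproj ξ + (ContinuousLinearMap.id ℂ h - Qproj ξ))
      = star c • Qproj ξ + (ContinuousLinearMap.id ℂ h - Qproj ξ) := by
  simp only [map_add, map_sub, map_smulₛₗ, Qproj]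
  rw [ContinuousLinearMap.adjoint_id, adjoint_rankOne]; rfl

lemma star_Uop (ξ : h) (t : ℝ) :
    star (Uop ξ t) = blk ((Real.sqrt (1 - t * ‖ξ‖ ^ 2) : ℝ) : ℂ)
      ((Real.sqrt t : ℂ) • innerSL ℂ ξ)
      (-((Real.sqrt t : ℂ) • ContinuousLinearMap.toSpanSingleton ℂ ξ))
      (((Real.sqrt (1 - t * ‖ξ‖ ^ 2) : ℝ) : ℂ) • Qproj ξ +
        (ContinuousLinearMap.id ℂ h - Qproj ξ)) := by
  have h1 : Uop ξ t = blk ((Real.sqrt (1 - t * ‖ξ‖ ^ 2) : ℝ) : ℂ)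
      ((-(Real.sqrt t : ℂ)) • innerSL ℂ ξ)
      ((Real.sqrt t : ℂ) • ContinuousLinearMap.toSpanSingleton ℂ ξ)
      (((Real.sqrt (1 - t * ‖ξ‖ ^ 2) : ℝ) : ℂ) • Qproj ξ +
        (ContinuousLinearMap.id ℂ h - Qproj ξ)) := by rw [Uop]; congr 1; exact (neg_smul _ _).symm
  rw [h1, star_blk, adjoint_Uop_d]
  simp [Complex.conj_ofReal, neg_smul]

set_option maxRecDepth 10000 in
/-- With `ψ^{(t)}(a) = U*(χ(a) ⊕ π(a))U`, `Σ_t` conjugation by the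
scaling `S_t = diag(t^{−1/2}, I)`, `φ` the implemented block map, `φ₁`, `φ₂` the fixed
completely bounded maps above, and `c_t = √(1 − t‖ξ‖²)`, the exact identity
`φ − Σ_t(ψ^{(t)} − χ(·)I) = (t/(1+c_t)) φ₁ − (t²/(1+c_t)²) φ₂` holds. -/
theorem stmt15 (χ : A →⋆ₙₐ[ℂ] ℂ) (hχ : χ ≠ 0)
    (π : A →⋆ₙₐ[ℂ] (h →L[ℂ] h)) (ξ : h)
    (t : ℝ) (ht : 0 < t) (hξ : t * ‖ξ‖ ^ 2 ≤ 1) :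
    ∀ a : A,
      phiMap π χ ξ a -
        Sop t ∘L (psiH π χ ξ t a - χ a • (1 : hilHat h →L[ℂ] hilHat h)) ∘L Sop t =
      ((t / (1 + Real.sqrt (1 - t * ‖ξ‖ ^ 2)) : ℝ) : ℂ) • phi1 π χ ξ a -
      ((t ^ 2 / (1 + Real.sqrt (1 - t * ‖ξ‖ ^ 2)) ^ 2 : ℝ) : ℂ) • phi2 π χ ξ a := by
  intro a
  rcases eq_or_ne ξ 0 with rfl | hxi
  · have hst : (Real.sqrt t : ℂ) ≠ 0 := by
      exact_mod_cast (Real.sqrt_pos.mpr ht).ne'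
    ext x
    apply hilHat_ext <;>
    · simp only [phiMap, phi1, phi2, psiH, star_Uop]
      simp [Uop, Sop, Qproj, Xop, xiNorm, gammaF, nuMap, blk_apply,
        ContinuousLinearMap.toSpanSingleton_apply]
      try ring1
  · have hn0 : ‖ξ‖ ≠ 0 := norm_ne_zero_iff.mpr hxi
    have hcnn : (0:ℝ) ≤ 1 - t * ‖ξ‖ ^ 2 := by linarith
    set c := Real.sqrt (1 - t * ‖ξ‖ ^ 2) with hcdef
    set s := Real.sqrt t with hsdef
    have hc2 : c ^ 2 = 1 - t * ‖ξ‖ ^ 2 := Real.sq_sqrt hcnn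
    have hc0 : 0 ≤ c := Real.sqrt_nonneg _
    have hs2 : s ^ 2 = t := Real.sq_sqrt ht.le
    have hs0 : 0 < s := Real.sqrt_pos.mpr ht
    have hc2c : (c : ℂ) ^ 2 = 1 - (t : ℂ) * (‖ξ‖ : ℂ) ^ 2 := by exact_mod_cast hc2
    have hs2c : (s : ℂ) ^ 2 = (t : ℂ) := by exact_mod_cast hs2
    have hs0c : (s : ℂ) ≠ 0 := by exact_mod_cast hs0.ne'
    have hc1 : (0:ℝ) < 1 + c := by linarith
    have hc1c : 1 + (c : ℂ) ≠ 0 := by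
      have : ((1 + c : ℝ) : ℂ) ≠ 0 := Complex.ofReal_ne_zero.mpr hc1.ne'
      push_cast at this; exact this
    have hn0c : ((‖ξ‖ : ℝ) : ℂ) ≠ 0 := Complex.ofReal_ne_zero.mpr hn0
    have hii : (inner ℂ ξ ξ : ℂ) = ((‖ξ‖ : ℝ) : ℂ) ^ 2 := by
      rw [inner_self_eq_norm_sq_to_K]; norm_num
    have hH1 : ((s : ℝ) : ℂ)⁻¹ * ((s : ℝ) : ℂ) = 1 := inv_mul_cancel₀ hs0c
    have hH2 : ((‖ξ‖ : ℝ) : ℂ)⁻¹ * ((‖ξ‖ : ℝ) : ℂ) = 1 := inv_mul_cancel₀ hn0c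
    have hH3 : (1 + (c : ℂ))⁻¹ * (1 + (c : ℂ)) = 1 := inv_mul_cancel₀ hc1c
    have hH4 : (c : ℂ) ^ 2 = 1 - (s : ℂ) ^ 2 * ((‖ξ‖ : ℝ) : ℂ) ^ 2 := by
      rw [hs2c]; exact hc2c
    ext x
    apply hilHat_ext
    · simp only [phiMap, phi1, phi2, psiH, star_Uop]
      simp [Uop, Sop, Qproj, Xop, xiNorm, gammaF, nuMap, blk_apply,
        ContinuousLinearMap.toSpanSingleton_apply, inner_smul_left, inner_smul_right,
        inner_sub_right, inner_add_right, hii]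
      simp only [RCLike.real_smul_eq_coe_smul (K := ℂ) (E := h), Complex.real_smul,
        inner_smul_right, inner_smul_left, Complex.conj_ofReal, Complex.ofReal_inv,
        map_inv₀, Complex.coe_algebraMap]
      rw [← hcdef, ← hsdef, ← hs2c]
      linear_combination (-1*(inner ℂ ξ ((π a) x.snd) : ℂ) + -1*(inner ℂ ξ ((π a) ξ) : ℂ)*x.fst + (‖ξ‖:ℂ)^2*χ a*x.fst + (c:ℂ)*(inner ℂ ξ x.snd : ℂ)*χ a + (↑‖ξ‖)⁻¹^2*(inner ℂ ξ ((π a) ξ) : ℂ)*(inner ℂ ξ x.snd : ℂ) + -1*(↑‖ξ‖)⁻¹^2*(c:ℂ)*(inner ℂ ξ ((π a) ξ) : ℂ)*(inner ℂ ξ x.snd : ℂ) + -1*(↑s)⁻¹*(s:ℂ)*(inner ℂ ξ ((π a) ξ) : ℂ)*x.fst + (↑s)⁻¹*(s:ℂ)*(‖ξ‖:ℂ)^2*χ a*x.fst) * hH1 + ((1+(c:ℂ))⁻¹*(s:ℂ)^2*(inner ℂ ξ ((π a) ξ) : ℂ)*(inner ℂ ξ x.snd : ℂ) + (↑‖ξ‖)⁻¹*(1+(c:ℂ))⁻¹*(s:ℂ)^2*(‖ξ‖:ℂ)*(inner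 ℂ ξ ((π a) ξ) : ℂ)*(inner ℂ ξ x.snd : ℂ)) * hH2 + ((inner ℂ ξ x.snd : ℂ)*χ a + -1*(c:ℂ)*(inner ℂ ξ x.snd : ℂ)*χ a + -1*(↑‖ξ‖)⁻¹^2*(inner ℂ ξ ((π a) ξ) : ℂ)*(inner ℂ ξ x.snd : ℂ) + (↑‖ξ‖)⁻¹^2*(c:ℂ)*(inner ℂ ξ ((π a) ξ) : ℂ)*(inner ℂ ξ x.snd : ℂ)) * hH3 + ((1+(c:ℂ))⁻¹*(inner ℂ ξ x.snd : ℂ)*χ a + -1*(↑‖ξ‖)⁻¹^2*(1+(c:ℂ))⁻¹*(inner ℂ ξ ((π a) ξ) : ℂ)*(inner ℂ ξ x.snd : ℂ) + -1*(↑s)⁻¹^2*χ a*x.fst) * hH4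
    · simp only [phiMap, phi1, phi2, psiH, star_Uop]
      simp [Uop, Sop, Qproj, Xop, xiNorm, gammaF, nuMap, blk_apply,
        ContinuousLinearMap.toSpanSingleton_apply, inner_smul_left, inner_smul_right,
        inner_sub_right, inner_add_right, hii]
      simp only [RCLike.real_smul_eq_coe_smul (K := ℂ) (E := h), Complex.real_smul,
        inner_smul_right, inner_smul_left, Complex.conj_ofReal, Complex.ofReal_inv,
        map_inv₀, Complex.coe_algebraMap]
      rw [← hcdef, ← hsdef]
      match_scalars
      · rw [← hs2c]
        linear_combination (-1*x.fst) * hH1 + ((1+(c:ℂ))⁻¹*(s:ℂ)^2*(inner ℂ ξ x.snd : ℂ) + (↑‖ξ‖)⁻¹*(1+(c:ℂ))⁻¹*(s:ℂ)^2*(‖ξ‖:ℂ)*(inner ℂ ξ x.snd : ℂ)) * hH2 + (-1*(↑‖ξ‖)⁻¹^2*(inner ℂ ξ x.snd : ℂ) + (↑‖ξ‖)⁻¹^2*(c:ℂ)*(inner ℂ ξ x.snd : ℂ)) * hH3 + (-1*(↑‖ξ‖)⁻¹^2*(1+(c:ℂ))⁻¹*(inner ℂ ξ x.snd : ℂ))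 * hH4
      · rw [← hs2c, ← div_pow]
        linear_combination ((c:ℂ)*χ a*x.fst + (↑‖ξ‖)⁻¹^2*(inner ℂ ξ ((π a) ξ) : ℂ)*x.fst + -1*(↑‖ξ‖)⁻¹^2*(c:ℂ)*(inner ℂ ξ ((π a) ξ) : ℂ)*x.fst) * hH1 + ((1+(c:ℂ))⁻¹*(s:ℂ)^2*(inner ℂ ξ ((π a) x.snd) : ℂ) + (1+(c:ℂ))⁻¹*(s:ℂ)^2*(inner ℂ ξ ((π a) ξ) : ℂ)*x.fst + -1*(1+(c:ℂ))⁻¹^2*(s:ℂ)^4*(inner ℂ ξ ((π a) ξ) : ℂ)*(inner ℂ ξ x.snd : ℂ) + (↑‖ξ‖)⁻¹*(1+(c:ℂ))⁻¹*(s:ℂ)^2*(‖ξ‖:ℂ)*(inner ℂ ξ ((π a) x.snd) : ℂ) + (↑‖ξ‖)⁻¹*(1+(c:ℂ))⁻¹*(s:ℂ)^2*(‖ξ‖:ℂ)*(inner ℂ ξ ((π a) ξ) : ℂ)*x.fst + -1*(↑‖ξ‖)⁻¹*(1+(c:ℂ))⁻¹^2*(s:ℂ)^4*(‖ξ‖:ℂ)*(inner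 ℂ ξ ((π a) ξ) : ℂ)*(inner ℂ ξ x.snd : ℂ) + (↑‖ξ‖)⁻¹^2*(s:ℂ)^2*(inner ℂ ξ ((π a) ξ) : ℂ)*(inner ℂ ξ x.snd : ℂ) + -2*(↑‖ξ‖)⁻¹^2*(1+(c:ℂ))⁻¹*(s:ℂ)^2*(inner ℂ ξ ((π a) ξ) : ℂ)*(inner ℂ ξ x.snd : ℂ) + (↑‖ξ‖)⁻¹^3*(s:ℂ)^2*(‖ξ‖:ℂ)*(inner ℂ ξ ((π a) ξ) : ℂ)*(inner ℂ ξ x.snd : ℂ) + -2*(↑‖ξ‖)⁻¹^3*(1+(c:ℂ))⁻¹*(s:ℂ)^2*(‖ξ‖:ℂ)*(inner ℂ ξ ((π a) ξ) : ℂ)*(inner ℂ ξ x.snd : ℂ)) * hH2 + (χ a*x.fst + (s:ℂ)^2*(inner ℂ ξ x.snd : ℂ)*χ a + -1*(c:ℂ)*χ a*x.fst + -1*(1+(c:ℂ))⁻¹*(s:ℂ)^2*(inner ℂ ξ x.snd : ℂ)*χ a + (1+(c:ℂ))⁻¹*(c:ℂ)*(s:ℂ)^2*(inner ℂ ξ x.snd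 : ℂ)*χ a + -1*(↑‖ξ‖)⁻¹^2*(inner ℂ ξ ((π a) x.snd) : ℂ) + -1*(↑‖ξ‖)⁻¹^2*(inner ℂ ξ ((π a) ξ) : ℂ)*x.fst + -1*(↑‖ξ‖)⁻¹^2*(s:ℂ)^2*(inner ℂ ξ ((π a) ξ) : ℂ)*(inner ℂ ξ x.snd : ℂ) + (↑‖ξ‖)⁻¹^2*(c:ℂ)*(inner ℂ ξ ((π a) x.snd) : ℂ) + (↑‖ξ‖)⁻¹^2*(c:ℂ)*(inner ℂ ξ ((π a) ξ) : ℂ)*x.fst + (↑‖ξ‖)⁻¹^2*(1+(c:ℂ))⁻¹*(s:ℂ)^2*(inner ℂ ξ ((π a) ξ) : ℂ)*(inner ℂ ξ x.snd : ℂ) + -1*(↑‖ξ‖)⁻¹^2*(1+(c:ℂ))⁻¹*(c:ℂ)*(s:ℂ)^2*(inner ℂ ξ ((π a) ξ) : ℂ)*(inner ℂ ξ x.snd : ℂ) + 2*(↑‖ξ‖)⁻¹^4*(inner ℂ ξ ((π a) ξ) : ℂ)*(inner ℂ ξ x.snd : ℂ) + -2*(↑‖ξ‖)⁻¹^4*(c:ℂ)*(inner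 ℂ ξ ((π a) ξ) : ℂ)*(inner ℂ ξ x.snd : ℂ)) * hH3 + ((1+(c:ℂ))⁻¹*χ a*x.fst + -1*(1+(c:ℂ))⁻¹^2*(s:ℂ)^2*(inner ℂ ξ x.snd : ℂ)*χ a + -1*(↑‖ξ‖)⁻¹^2*(1+(c:ℂ))⁻¹*(inner ℂ ξ ((π a) x.snd) : ℂ) + -1*(↑‖ξ‖)⁻¹^2*(1+(c:ℂ))⁻¹*(inner ℂ ξ ((π a) ξ) : ℂ)*x.fst + (↑‖ξ‖)⁻¹^2*(1+(c:ℂ))⁻¹^2*(s:ℂ)^2*(inner ℂ ξ ((π a) ξ) : ℂ)*(inner ℂ ξ x.snd : ℂ) + -1*(↑‖ξ‖)⁻¹^4*(inner ℂ ξ ((π a) ξ) : ℂ)*(inner ℂ ξ x.snd : ℂ) + 2*(↑‖ξ‖)⁻¹^4*(1+(c:ℂ))⁻¹*(inner ℂ ξ ((π a) ξ) : ℂ)*(inner ℂ ξ x.snd : ℂ)) * hH4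
      · ring1
      · ring1
end
end
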